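/- Let G be a linearly ordered abelian group, k : ℕ, W : Matrix (Fin (k+1)) (Fin k) (WithBot G) and f : Fin (k+1) → WithBot G. Let M be the (k+1)×(k+1) matrix whose first k columns are those of W and whose last column is f, and for i : Fin (k+1) let W_î : Matrix (Fin k) (Fin k) (WithBot G) be W with row i deleted (rows reindexed via Fin.succAbove i). Then tper M = ⊔_{i : Fin (k+1)} (f i + tper W_î). -/

import Mathlib

noncomputable section

variable {G : Type*} [AddCommGroup G] [LinearOrder G] [IsOrderedAddMonoid G]

/-- Tropical permanent of a square matrix over the max-plus semiring `WithBot G`: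
`tper M = ⊔_σ Σ_i M i (σ i)`, sums taken in `WithBot G` (`⊥` is absorbing for `+`). -/
def tper {k : ℕ} (M : Matrix (Fin k) (Fin k) (WithBot G)) : WithBot G :=
  Finset.univ.sup (fun σ : Equiv.Perm (Fin k) => ∑ i, M i (σ i))

private def permSnoc {k : ℕ} (p : Fin (k + 1) × Equiv.Perm (Fin k)) :
    Equiv.Perm (Fin (k + 1)) :=
  ((finSuccEquiv' p.1).trans (p.2.optionCongr)).trans (finSuccEquiv' (Fin.last k)).symm

private lemma permSnoc_self {k : ℕ} (i : Fin (k + 1)) (τ : Equiv.Perm (Fin k)) :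
    permSnoc (i, τ) i = Fin.last k := by
  simp [permSnoc]

private lemma permSnoc_succAbove {k : ℕ} (i : Fin (k + 1)) (τ : Equiv.Perm (Fin k))
    (a : Fin k) : permSnoc (i, τ) (i.succAbove a) = Fin.castSucc (τ a) := by
  simp [permSnoc, Fin.succAbove_last]

private lemma permSnoc_bijective {k : ℕ} :
    Function.Bijective (permSnoc (k := k)) := by
  rw [Fintype.bijective_iff_injective_and_card]
  constructor
  · rintro ⟨i, τ⟩ ⟨j, ρ⟩ h
    have hij : i = j := by
      apply (permSnoc (i, τ)).injective
      rw [permSnoc_self, h, permSnoc_self]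
    subst hij
    simp only [Prod.mk.injEq, true_and]
    ext a
    have h1 := permSnoc_succAbove i τ a
    have h2 := permSnoc_succAbove i ρ a
    rw [h] at h1
    exact congrArg Fin.val (Fin.castSucc_injective k (h1.symm.trans h2))
  · simp [Fintype.card_perm, Nat.factorial_succ]

private lemma add_sup_univ {α : Type*} [Fintype α] [Nonempty α]
    (c : WithBot G) (g : α → WithBot G) :
    c + Finset.univ.sup g = Finset.univ.sup fun x => c + g x := by
  have hne : (Finset.univ : Finset α).Nonempty := Finset.univ_nonempty
  rw [← Finset.sup'_eq_sup hne, ← Finset.sup'_eq_sup hne]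
  exact Finset.comp_sup'_eq_sup'_comp hne (fun x => c + x)
    (fun x y => by rw [max_add_add_left])

/-- For the `(k+1) × (k+1)` matrix `M` whose first `k` columns are those
of `W` and whose last column is `f`, the tropical permanent expands along the last column:
`tper M = ⊔_i (f i + tper W_î)`, where `W_î` is `W` with row `i` deleted. -/
theorem tper_expansion_last_column (k : ℕ)
    (W : Matrix (Fin (k + 1)) (Fin k) (WithBot G)) (f : Fin (k + 1) → WithBot G) :
    tper (Matrix.of fun i => Fin.snoc (W i) (f i)) =
      Finset.univ.sup
        (fun i : Fin (k + 1) =>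
          f i + tper (Matrix.of fun a b => W (i.succAbove a) b)) := by
  have himg : (Finset.univ.image (permSnoc (k := k))) = Finset.univ :=
    Finset.image_univ_of_surjective permSnoc_bijective.surjective
  rw [tper, ← himg, Finset.sup_image, ← Finset.univ_product_univ,
    Finset.sup_product_left]
  refine Finset.sup_congr rfl fun i _ => ?_
  have key : ∀ τ : Equiv.Perm (Fin k),
      ∑ j, (Matrix.of fun r => Fin.snoc (W r) (f r)) j (permSnoc (i, τ) j)
        = f i + ∑ a, W (i.succAbove a) (τ a) := by
    intro τ
    rw [Fin.sum_univ_succAbove _ i]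
    congr 1
    · simp [permSnoc_self]
    · exact Finset.sum_congr rfl fun a _ => by simp [permSnoc_succAbove]
  simp only [Function.comp, key]
  rw [tper, add_sup_univ]
  exact Finset.sup_congr rfl fun τ _ => by simp [Matrix.of_apply]

end
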